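/- The following integrals vanish: ∫_{−π/2}^{π/2} log|2·sin(y) − 1| dy = 0 and ∫_{−π/2}^{π/2} log|2·sin(y) + 1| dy = 0. -/

import Mathlib

open MeasureTheory Real

noncomputable def f17 : ℝ → ℝ := fun x => Real.log |2 * Real.sin x|

lemma f17_neg (x : ℝ) : f17 (-x) = f17 x := by
  unfold f17; rw [Real.sin_neg, mul_neg, abs_neg]

lemma f17_pi_sub (x : ℝ) : f17 (π - x) = f17 x := by
  unfold f17; rw [Real.sin_pi_sub]

lemma f17_add_pi (x : ℝ) : f17 (x + π) = f17 x := by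
  have h : Real.sin (x + π) = -Real.sin x := by simp [Real.sin_add]
  unfold f17; rw [h, mul_neg, abs_neg]

lemma f17_meas : Measurable f17 :=
  Real.measurable_log.comp ((measurable_const.mul Real.measurable_sin).abs)

lemma int_base : IntervalIntegrable f17 volume 0 (π / 2) := by
  have hpi := Real.pi_pos
  have hg : IntervalIntegrable (fun x : ℝ => Real.log 2 + 2 * x ^ (-(1/2) : ℝ)) volume 0 (π/2) :=
    intervalIntegrable_const.add
      ((intervalIntegral.intervalIntegrable_rpow' (by norm_num)).const_mul 2)
  apply hg.mono_fun f17_meas.aestronglyMeasurable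
  filter_upwards [MeasureTheory.ae_restrict_mem measurableSet_uIoc] with x hx
  rw [Set.uIoc_of_le (by linarith : (0:ℝ) ≤ π/2)] at hx
  obtain ⟨hx0, hx2⟩ := hx
  have hs : 0 < Real.sin x := Real.sin_pos_of_pos_of_lt_pi hx0 (by linarith)
  have habs : |2 * Real.sin x| = 2 * Real.sin x := abs_of_pos (by linarith)
  have hub : f17 x ≤ Real.log 2 := by
    unfold f17; rw [habs]
    exact (Real.log_le_log_iff (by linarith) (by norm_num)).mpr
      (by nlinarith [Real.sin_le_one x])
  have hx2sin : x ≤ 2 * Real.sin x := by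
    have h1 := Real.mul_le_sin hx0.le hx2
    have h2 : x ≤ 2 * (2 / π * x) := by
      rw [show 2 * (2/π*x) = 4*x/π by ring, le_div_iff₀ hpi]
      nlinarith [Real.pi_le_four]
    linarith
  have hlb : Real.log x ≤ f17 x := by
    unfold f17; rw [habs]
    exact (Real.log_le_log_iff hx0 (by linarith)).mpr hx2sin
  have hrpow_pos : 0 < x ^ (-(1/2) : ℝ) := Real.rpow_pos_of_pos hx0 _
  have hlogx : -Real.log x ≤ 2 * x ^ (-(1/2) : ℝ) := by
    have h3 : Real.log (x ^ (-(1/2) : ℝ)) = (-(1/2)) * Real.log x := Real.log_rpow hx0 _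
    have h4 : Real.log (x ^ (-(1/2) : ℝ)) ≤ x ^ (-(1/2) : ℝ) :=
      (Real.log_le_sub_one_of_pos hrpow_pos).trans (by linarith)
    linarith
  have hlog2 : (0:ℝ) ≤ Real.log 2 := Real.log_nonneg (by norm_num)
  rw [Real.norm_eq_abs, Real.norm_eq_abs, abs_of_nonneg (by linarith : (0:ℝ) ≤ Real.log 2 + 2 * x ^ (-(1/2):ℝ))]
  apply abs_le.mpr
  constructor
  · linarith
  · linarith

lemma int_master : IntervalIntegrable f17 volume (-(π / 2)) π := by
  have hpi := Real.pi_pos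
  have h1 := int_base
  have h2 : IntervalIntegrable f17 volume (-(π/2)) 0 := by
    have h := h1.comp_sub_left 0
    simp only [zero_sub, sub_zero, sub_self] at h
    have hfun : (fun x => f17 (-x)) = f17 := funext f17_neg
    rw [hfun] at h
    exact h.symm
  have h3 : IntervalIntegrable f17 volume (π/2) π := by
    have h := h1.comp_sub_left π
    simp only [sub_zero] at h
    have hfun : (fun x => f17 (π - x)) = f17 := funext f17_pi_sub
    rw [hfun, show π - π/2 = π/2 by ring] at h
    exact h.symm
  exact (h2.trans h1).trans h3

lemma int_sub {a b : ℝ} (ha : -(π/2) ≤ a) (hab : a ≤ b) (hb : b ≤ π) :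
    IntervalIntegrable f17 volume a b := by
  have hpi := Real.pi_pos
  apply int_master.mono_set
  rw [Set.uIcc_of_le hab, Set.uIcc_of_le (by linarith : -(π/2) ≤ π)]
  exact Set.Icc_subset_Icc ha hb

lemma K17 : (∫ x in (0:ℝ)..π, f17 x) = 0 := by
  have hpi := Real.pi_pos
  have h1 : IntervalIntegrable f17 volume 0 (π/2) := int_base
  have h2 : IntervalIntegrable f17 volume (π/2) π := int_sub (by linarith) (by linarith) le_rfl
  have e2 : (∫ x in (π/2)..π, f17 x) = ∫ x in (0:ℝ)..(π/2), f17 x := by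
    have h := intervalIntegral.integral_comp_sub_left (a := 0) (b := π/2) f17 π
    simp only [f17_pi_sub, sub_zero, show π - π/2 = π/2 by ring] at h
    exact h.symm
  have hsum : (∫ x in (0:ℝ)..π, f17 x)
      = (∫ x in (0:ℝ)..(π/2), f17 x) + ∫ x in (0:ℝ)..(π/2), f17 x := by
    rw [← intervalIntegral.integral_add_adjacent_intervals h1 h2, e2]
  -- doubling identity
  have hsub : IntervalIntegrable (fun x => f17 (π/2 - x)) volume 0 (π/2) := by
    have h := h1.comp_sub_left (π/2)
    simp only [sub_zero, sub_self] at h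
    exact h.symm
  have hcong : (∫ x in (0:ℝ)..(π/2), f17 (2 * x))
      = ∫ x in (0:ℝ)..(π/2), (f17 x + f17 (π/2 - x)) := by
    apply intervalIntegral.integral_congr_ae
    have hne : ∀ᵐ x : ℝ, x ∉ ({π/2} : Set ℝ) := (Set.countable_singleton (π/2)).ae_notMem volume
    filter_upwards [hne] with x hx hmem
    rw [Set.uIoc_of_le (by linarith : (0:ℝ) ≤ π/2)] at hmem
    obtain ⟨hx0, hxle⟩ := hmem
    have hxne : x ≠ π/2 := by simpa using hx
    have hs : Real.sin x ≠ 0 := ne_of_gt (Real.sin_pos_of_pos_of_lt_pi hx0 (by linarith))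
    have hc : Real.cos x ≠ 0 := ne_of_gt (Real.cos_pos_of_mem_Ioo ⟨by linarith, lt_of_le_of_ne hxle hxne⟩)
    unfold f17
    rw [Real.sin_two_mul, Real.sin_pi_div_two_sub,
      show (2:ℝ) * (2 * Real.sin x * Real.cos x) = (2 * Real.sin x) * (2 * Real.cos x) by ring,
      abs_mul,
      Real.log_mul (abs_ne_zero.mpr (mul_ne_zero two_ne_zero hs))
        (abs_ne_zero.mpr (mul_ne_zero two_ne_zero hc))]
  have e3 : (∫ x in (0:ℝ)..(π/2), f17 (2 * x)) = 2⁻¹ * ∫ x in (0:ℝ)..π, f17 x := by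
    have h := intervalIntegral.integral_comp_mul_left (a := 0) (b := π/2) f17 (two_ne_zero (α := ℝ))
    rw [mul_zero, show (2:ℝ) * (π/2) = π by ring, smul_eq_mul] at h
    exact h
  have e4 : (∫ x in (0:ℝ)..(π/2), f17 (π/2 - x)) = ∫ x in (0:ℝ)..(π/2), f17 x := by
    have h := intervalIntegral.integral_comp_sub_left (a := 0) (b := π/2) f17 (π/2)
    rw [sub_zero, sub_self] at h
    rw [h, intervalIntegral.integral_symm]
  have e5 : (∫ x in (0:ℝ)..(π/2), f17 (2 * x))
      = (∫ x in (0:ℝ)..(π/2), f17 x) + ∫ x in (0:ℝ)..(π/2), f17 x := by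
    rw [hcong, intervalIntegral.integral_add h1 hsub, e4]
  rw [e5] at e3
  linarith [hsum, e3]

lemma J17 : (∫ x in (-(π/3))..(2*π/3), f17 x) = 0 := by
  have hpi := Real.pi_pos
  have i1 : IntervalIntegrable f17 volume (-(π/3)) 0 := int_sub (by linarith) (by linarith) (by linarith)
  have i2 : IntervalIntegrable f17 volume 0 (2*π/3) := int_sub (by linarith) (by linarith) (by linarith)
  have i3 : IntervalIntegrable f17 volume (2*π/3) π := int_sub (by linarith) (by linarith) le_rfl
  have e1 : (∫ x in (-(π/3))..(0:ℝ), f17 x) = ∫ x in (2*π/3)..π, f17 x := by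
    have h := intervalIntegral.integral_comp_add_right (a := -(π/3)) (b := 0) f17 π
    simp only [f17_add_pi, zero_add, show -(π/3) + π = 2*π/3 by ring] at h
    exact h
  rw [← intervalIntegral.integral_add_adjacent_intervals i1 i2, e1, add_comm,
    intervalIntegral.integral_add_adjacent_intervals i2 i3]
  exact K17

lemma fact17 (y : ℝ) : 2 * Real.sin y - 1
    = (2 * Real.cos ((y + π/6)/2)) * (2 * Real.sin ((y - π/6)/2)) := by
  have h1 : Real.sin y = Real.sin ((y + π/6)/2 + (y - π/6)/2) := by
    rw [show (y + π/6)/2 + (y - π/6)/2 = y by ring]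
  have h2 : (1:ℝ) = 2 * Real.sin ((y + π/6)/2 - (y - π/6)/2) := by
    rw [show (y + π/6)/2 - (y - π/6)/2 = π/6 by ring, Real.sin_pi_div_six]; norm_num
  rw [h1, Real.sin_add]
  rw [Real.sin_sub] at h2
  linarith [h2]

lemma Iminus17 : (∫ y in (-(π/2))..(π/2), Real.log |2 * Real.sin y - 1|) = 0 := by
  have hpi := Real.pi_pos
  -- a.e. splitting of the integrand
  have hcong : (∫ y in (-(π/2))..(π/2), Real.log |2 * Real.sin y - 1|)
      = ∫ y in (-(π/2))..(π/2),
          (Real.log |2 * Real.cos ((y + π/6)/2)| + Real.log |2 * Real.sin ((y - π/6)/2)|) := by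
    apply intervalIntegral.integral_congr_ae
    have hne : ∀ᵐ y : ℝ, y ∉ ({π/6} : Set ℝ) := (Set.countable_singleton (π/6)).ae_notMem volume
    filter_upwards [hne] with y hy hmem
    rw [Set.uIoc_of_le (by linarith : -(π/2) ≤ π/2)] at hmem
    obtain ⟨hy1, hy2⟩ := hmem
    have hyne : y ≠ π/6 := by simpa using hy
    have hc : Real.cos ((y + π/6)/2) ≠ 0 :=
      ne_of_gt (Real.cos_pos_of_mem_Ioo ⟨by linarith, by linarith⟩)
    have hs : Real.sin ((y - π/6)/2) ≠ 0 := by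
      intro h
      have h0 : (y - π/6)/2 = 0 :=
        (Real.sin_eq_zero_iff_of_lt_of_lt (by linarith) (by linarith)).mp h
      exact hyne (by linarith)
    rw [fact17 y, abs_mul,
      Real.log_mul (abs_ne_zero.mpr (mul_ne_zero two_ne_zero hc))
        (abs_ne_zero.mpr (mul_ne_zero two_ne_zero hs))]
  -- integrability of both pieces
  have ig1 : IntervalIntegrable (fun y => Real.log |2 * Real.cos ((y + π/6)/2)|)
      volume (-(π/2)) (π/2) := by
    apply ContinuousOn.intervalIntegrable
    apply ContinuousOn.log
    · exact (continuous_abs.comp (continuous_const.mul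
        (Real.continuous_cos.comp (by continuity)))).continuousOn
    · intro y hy
      rw [Set.uIcc_of_le (by linarith : -(π/2) ≤ π/2)] at hy
      exact abs_ne_zero.mpr (mul_ne_zero two_ne_zero
        (ne_of_gt (Real.cos_pos_of_mem_Ioo ⟨by linarith [hy.1], by linarith [hy.2]⟩)))
  have ig2 : IntervalIntegrable (fun y => f17 ((y - π/6)/2)) volume (-(π/2)) (π/2) := by
    have base : IntervalIntegrable f17 volume (-(π/3)) (π/6) :=
      int_sub (by linarith) (by linarith) (by linarith)
    have s1 := (base.comp_sub_right (π/12)).comp_mul_left (c := 1/2) enorm_ne_top enorm_ne_top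
    have hfun : ∀ x : ℝ, (1:ℝ)/2 * x - π/12 = (x - π/6)/2 := fun x => by ring
    simp only [hfun] at s1
    rw [show ((-(π/3) + π/12)/((1:ℝ)/2)) = -(π/2) by ring,
      show ((π/6 + π/12)/((1:ℝ)/2)) = π/2 by ring] at s1
    exact s1
  have ig2' : IntervalIntegrable (fun y => Real.log |2 * Real.sin ((y - π/6)/2)|)
      volume (-(π/2)) (π/2) := ig2
  -- first piece
  have E1 : (∫ y in (-(π/2))..(π/2), Real.log |2 * Real.cos ((y + π/6)/2)|)
      = 2 * ∫ x in (π/6)..(2*π/3), f17 x := by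
    have step1 : (∫ y in (-(π/2))..(π/2), Real.log |2 * Real.cos ((y + π/6)/2)|)
        = ∫ y in (-(π/2))..(π/2), (fun u => Real.log |2 * Real.cos u|) ((1:ℝ)/2 * y + π/12) := by
      apply intervalIntegral.integral_congr
      intro x hx
      simp only
      rw [show (1:ℝ)/2 * x + π/12 = (x + π/6)/2 by ring]
    rw [step1, intervalIntegral.integral_comp_mul_add (fun u => Real.log |2 * Real.cos u|)
      (by norm_num : ((1:ℝ)/2) ≠ 0) (π/12)]
    rw [show ((1:ℝ)/2 * (-(π/2)) + π/12) = -(π/6) by ring,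
      show ((1:ℝ)/2 * (π/2) + π/12) = π/3 by ring]
    have step2 : (∫ u in (-(π/6))..(π/3), Real.log |2 * Real.cos u|)
        = ∫ u in (-(π/6))..(π/3), f17 (π/2 - u) := by
      apply intervalIntegral.integral_congr
      intro x _
      show Real.log |2 * Real.cos x| = f17 (π/2 - x)
      unfold f17
      rw [Real.sin_pi_div_two_sub]
    rw [step2, intervalIntegral.integral_comp_sub_left f17 (π/2),
      show (π/2 - π/3 : ℝ) = π/6 by ring, show (π/2 - -(π/6) : ℝ) = 2*π/3 by ring,
      smul_eq_mul]
    norm_num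
  -- second piece
  have E2 : (∫ y in (-(π/2))..(π/2), Real.log |2 * Real.sin ((y - π/6)/2)|)
      = 2 * ∫ x in (-(π/3))..(π/6), f17 x := by
    have step1 : (∫ y in (-(π/2))..(π/2), Real.log |2 * Real.sin ((y - π/6)/2)|)
        = ∫ y in (-(π/2))..(π/2), f17 ((1:ℝ)/2 * y + (-(π/12))) := by
      apply intervalIntegral.integral_congr
      intro x hx
      show Real.log |2 * Real.sin ((x - π/6)/2)| = f17 ((1:ℝ)/2 * x + (-(π/12)))
      unfold f17
      rw [show (1:ℝ)/2 * x + (-(π/12)) = (x - π/6)/2 by ring]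
    rw [step1, intervalIntegral.integral_comp_mul_add f17
      (by norm_num : ((1:ℝ)/2) ≠ 0) (-(π/12))]
    rw [show ((1:ℝ)/2 * (-(π/2)) + (-(π/12))) = -(π/3) by ring,
      show ((1:ℝ)/2 * (π/2) + (-(π/12))) = π/6 by ring, smul_eq_mul]
    norm_num
  -- combine
  have iA : IntervalIntegrable f17 volume (-(π/3)) (π/6) :=
    int_sub (by linarith) (by linarith) (by linarith)
  have iB : IntervalIntegrable f17 volume (π/6) (2*π/3) :=
    int_sub (by linarith) (by linarith) (by linarith)
  rw [hcong, intervalIntegral.integral_add ig1 ig2', E1, E2]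
  have hadd : (∫ x in (-(π/3))..(π/6), f17 x) + ∫ x in (π/6)..(2*π/3), f17 x
      = ∫ x in (-(π/3))..(2*π/3), f17 x :=
    intervalIntegral.integral_add_adjacent_intervals iA iB
  have := J17
  linarith [hadd]

theorem log_two_sin_integrals_vanish :
    (∫ y in Set.Icc (-(Real.pi / 2)) (Real.pi / 2), Real.log |2 * Real.sin y - 1|) = 0 ∧
    (∫ y in Set.Icc (-(Real.pi / 2)) (Real.pi / 2), Real.log |2 * Real.sin y + 1|) = 0 := by
  have hpi := Real.pi_pos
  have hle : -(Real.pi/2) ≤ Real.pi/2 := by linarith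
  have conv1 : ∀ φ : ℝ → ℝ, (∫ y in Set.Icc (-(Real.pi/2)) (Real.pi/2), φ y)
      = ∫ y in (-(Real.pi/2))..(Real.pi/2), φ y := by
    intro φ
    rw [intervalIntegral.integral_of_le hle, MeasureTheory.integral_Icc_eq_integral_Ioc]
  have plus_eq : (∫ y in (-(π/2))..(π/2), Real.log |2 * Real.sin y + 1|)
      = ∫ y in (-(π/2))..(π/2), Real.log |2 * Real.sin y - 1| := by
    have h := intervalIntegral.integral_comp_neg (a := -(π/2)) (b := π/2)
      (fun y => Real.log |2 * Real.sin y - 1|)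
    simp only [neg_neg] at h
    rw [← h]
    apply intervalIntegral.integral_congr
    intro x _
    simp only [Real.sin_neg]
    congr 1
    rw [← abs_neg]
    congr 1
    ring
  constructor
  · rw [conv1]; exact Iminus17
  · rw [conv1, plus_eq]; exact Iminus17
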